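/- arXiv:2112.12986 — 3 statements merged into one kernel-verified Lean document; each statement's English description precedes it below -/
import Mathlib

section
/- The function ℓ_{α,β}(z) defined as 1/(z-(β-1))^α for z ≥ β and as -(z-β)+1 for z < β, with α = 1, is convex, differentiable, and strictly decreasing on ℝ. -/
/-- The polynomially-tailed loss with `α = 1`: linear left part and tail `1/(z-β+1)`,
is convex, differentiable and strictly decreasing on ℝ. -/
theorem polyTailLoss_convex_differentiable_strictAnti (β : ℝ) (ℓ : ℝ → ℝ)
    (hℓ : ∀ z : ℝ, ℓ z = if z < β then -(z - β) + 1 else 1 / (z - (β - 1))) :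
    ConvexOn ℝ Set.univ ℓ ∧ Differentiable ℝ ℓ ∧ StrictAnti ℓ := by
  set d : ℝ → ℝ := fun z => if z < β then -1 else -1 / (z - (β - 1)) ^ 2 with hd
  have hL : ∀ z : ℝ, HasDerivAt (fun z => -(z - β) + 1) (-1) z := by
    intro z
    simpa using (((hasDerivAt_id z).sub_const β).neg.add_const 1)
  have hRpos : ∀ z : ℝ, β ≤ z → (0:ℝ) < z - (β - 1) := fun z hz => by linarith
  have hR : ∀ z : ℝ, β ≤ z →
      HasDerivAt (fun z => 1 / (z - (β - 1))) (-1 / (z - (β - 1)) ^ 2) z := by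
    intro z hz
    have h := ((hasDerivAt_id z).sub_const (β - 1)).inv (ne_of_gt (hRpos z hz))
    simpa [one_div, Pi.inv_def] using h
  have key : ∀ z, HasDerivAt ℓ (d z) z := by
    intro z
    rcases lt_trichotomy z β with h | h | h
    · have hdz : d z = -1 := if_pos h
      rw [hdz]
      refine (hL z).congr_of_eventuallyEq ?_
      filter_upwards [Iio_mem_nhds h] with x hx
      rw [hℓ x, if_pos (show x < β from hx)]
    · subst h
      have hdz : d z = -1 := by
        simp only [hd, lt_irrefl, if_neg, sub_sub_cancel, one_pow]
        norm_num
      rw [hdz]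
      have hleft : HasDerivWithinAt ℓ (-1) (Set.Iic z) z := by
        refine ((hL z).hasDerivWithinAt).congr ?_ ?_
        · intro x hx
          rcases lt_or_eq_of_le (Set.mem_Iic.mp hx) with h | h
          · rw [hℓ x, if_pos h]
          · subst h; rw [hℓ x, if_neg (lt_irrefl _)]; simp
        · rw [hℓ z, if_neg (lt_irrefl _)]; simp
      have hright : HasDerivWithinAt ℓ (-1) (Set.Ici z) z := by
        have h := (hR z le_rfl).hasDerivWithinAt (s := Set.Ici z)
        have h1 : -1 / (z - (z - 1)) ^ 2 = (-1 : ℝ) := by norm_num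
        rw [h1] at h
        refine h.congr ?_ ?_
        · intro x hx
          rw [hℓ x, if_neg (not_lt.2 hx)]
        · rw [hℓ z, if_neg (lt_irrefl _)]
      have := hleft.union hright
      rw [Set.Iic_union_Ici] at this
      exact this.hasDerivAt (by simp)
    · have hdz : d z = -1 / (z - (β - 1)) ^ 2 := if_neg (not_lt.2 h.le)
      rw [hdz]
      refine (hR z h.le).congr_of_eventuallyEq ?_
      filter_upwards [Ioi_mem_nhds h] with x hx
      rw [hℓ x, if_neg (not_lt.2 (le_of_lt hx))]
  have hdiff : Differentiable ℝ ℓ := fun z => (key z).differentiableAt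
  have hderiv : ∀ z, deriv ℓ z = d z := fun z => (key z).deriv
  have hdneg : ∀ z, d z < 0 := by
    intro z
    by_cases h : z < β
    · simp [hd, if_pos h]
    · have hpos := hRpos z (not_lt.1 h)
      simp only [hd, if_neg h]
      exact div_neg_of_neg_of_pos (by norm_num) (pow_pos hpos 2)
  have hanti : StrictAnti ℓ := strictAnti_of_deriv_neg fun x => by
    rw [hderiv]; exact hdneg x
  have hge : ∀ z, β ≤ z → (1:ℝ) ≤ z - (β - 1) := fun z hz => by linarith
  have hmono : Monotone d := by
    intro x y hxy
    by_cases hy : y < β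
    · have hx : x < β := lt_of_le_of_lt hxy hy
      simp [hd, if_pos hx, if_pos hy]
    · have hy' : β ≤ y := not_lt.1 hy
      by_cases hx : x < β
      · simp only [hd, if_pos hx, if_neg hy]
        have hp : (0:ℝ) < (y - (β - 1)) ^ 2 := pow_pos (hRpos y hy') 2
        have h1 : 1 / (y - (β - 1)) ^ 2 ≤ 1 := by
          rw [div_le_one hp]; nlinarith [hge y hy']
        rw [neg_div]; linarith
      · have hx' : β ≤ x := not_lt.1 hx
        simp only [hd, if_neg hx, if_neg hy]
        rw [neg_div, neg_div, neg_le_neg_iff]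
        exact one_div_le_one_div_of_le (pow_pos (hRpos x hx') 2)
          (by nlinarith [hRpos x hx'])
  have hconv : ConvexOn ℝ Set.univ ℓ :=
    Monotone.convexOn_univ_of_deriv hdiff (by
      intro x y hxy
      rw [hderiv, hderiv]; exact hmono hxy)
  exact ⟨hconv, hdiff, hanti⟩
end

section
/- Suppose μ_1, μ_2 ∈ ℝ^d satisfy μ_1·μ_2 = 0 and ‖μ_1‖ = ‖μ_2‖ = ‖μ‖, the samples satisfy z_i = μ_1 + Uq_i for i ∈ 𝒫 and z_i = μ_2 + Uq_i for i ∈ 𝒩 with U orthogonal. Assume for all i: ‖z_i‖² ≥ d/c, |μ_1·z_i - ‖μ‖²| < ‖μ‖²/2 for i ∈ 𝒫, |(-μ_2)·z_i - ‖μ‖²| < ‖μ‖²/2 for i ∈ 𝒩, |z_i·z_j| ≤ c(‖μ‖² + √(d log(n/δ))) for i ≠ j, and d ≥ C n ‖μ‖² with ‖μ‖² ≥ C n² log(n/δ) for a sufficiently large constant C. Then the vector v = ∑_i z_i satisfies v·z_k ≥ d/(2c) for every k, and ‖v‖² ≤ 2c n d; hence the unit vector φ = v/‖v‖ achieves margin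 φ·z_k ≥ c'√(d/n) on every sample z_k, so in particular the data is linearly separable. -/
open scoped BigOperators

set_option maxHeartbeats 1000000

private lemma le_of_sq_le_sq_aux {a b : ℝ} (hb : 0 < b) (h : a ^ 2 ≤ b ^ 2) : a ≤ b := by
  nlinarith [sq_nonneg (a - b), sq_nonneg (a + b)]

/-- The sum of the samples achieves margin `d/(2c)` on every point and has squared norm at
most `2cnd`; hence the unit vector in its direction achieves margin `Ω(√(d/n))` on every
sample, and in particular the data is linearly separable. -/
theorem mean_direction_margin (c : ℝ) (hc : 1 ≤ c) :
    ∃ C₀ : ℝ, ∀ C : ℝ, C ≥ C₀ →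
      ∀ (d n : ℕ), 0 < d → 0 < n →
      ∀ (δ : ℝ), 0 < δ → δ < 1 →
      ∀ (μ1 μ2 : EuclideanSpace ℝ (Fin d))
        (z q : Fin n → EuclideanSpace ℝ (Fin d))
        (U : EuclideanSpace ℝ (Fin d) ≃ₗᵢ[ℝ] EuclideanSpace ℝ (Fin d))
        (Ps Ns : Finset (Fin n)),
        (inner ℝ μ1 μ2 : ℝ) = 0 → ‖μ1‖ = ‖μ2‖ →
        Disjoint Ps Ns → Ps ∪ Ns = Finset.univ →
        (∀ i ∈ Ps, z i = μ1 + U (q i)) → (∀ i ∈ Ns, z i = μ2 + U (q i)) →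
        (∀ i, (d : ℝ) / c ≤ ‖z i‖ ^ 2 ∧ ‖z i‖ ^ 2 ≤ c * d) →
        (∀ i ∈ Ps, |(inner ℝ μ1 (z i) : ℝ) - ‖μ1‖ ^ 2| < ‖μ1‖ ^ 2 / 2) →
        (∀ i ∈ Ns, |(inner ℝ (-μ2) (z i) : ℝ) - ‖μ1‖ ^ 2| < ‖μ1‖ ^ 2 / 2) →
        (∀ i j, i ≠ j →
          |(inner ℝ (z i) (z j) : ℝ)| ≤ c * (‖μ1‖ ^ 2 + Real.sqrt (d * Real.log (n / δ)))) →
        (d : ℝ) ≥ C * n * ‖μ1‖ ^ 2 → ‖μ1‖ ^ 2 ≥ C * n ^ 2 * Real.log (n / δ) →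
        (∀ k, (inner ℝ (∑ i, z i) (z k) : ℝ) ≥ d / (2 * c)) ∧
        ‖∑ i, z i‖ ^ 2 ≤ 2 * c * n * d ∧
        (∀ k, (inner ℝ ((‖∑ i, z i‖)⁻¹ • ∑ i, z i) (z k) : ℝ) ≥
          (1 / (2 * c * Real.sqrt (2 * c))) * Real.sqrt (d / n)) ∧
        (∃ u : EuclideanSpace ℝ (Fin d), ∀ k, 0 < (inner ℝ u (z k) : ℝ)) := by
  refine ⟨4 * c ^ 2 + 4, ?_⟩
  intro C hC d n hd hn δ hδ0 hδ1 μ1 μ2 z q U Ps Ns _ _ _ _ _ _ hnorm _ _ hcross hd2 hM2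
  have hc0 : (0:ℝ) < c := lt_of_lt_of_le one_pos hc
  set M := ‖μ1‖ ^ 2 with hMdef
  set L := Real.log ((n:ℝ) / δ) with hLdef
  have hn1 : (1:ℝ) ≤ (n:ℝ) := by exact_mod_cast hn
  have hd0 : (0:ℝ) < (d:ℝ) := by exact_mod_cast hd
  have hL0 : 0 ≤ L := Real.log_nonneg (by rw [le_div_iff₀ hδ0]; linarith)
  have hM0 : 0 ≤ M := sq_nonneg _
  have hC4 : 4 * c ^ 2 ≤ C := by linarith
  have hC0 : (0:ℝ) < C := by linarith [sq_nonneg c]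
  -- basic consequences of assumptions
  have h1 : (n:ℝ) * M * C ≤ d := by linarith [hd2]
  have h2 : (n:ℝ) ^ 2 * L * C ≤ M := by linarith [hM2]
  have hMd : M * C ≤ d := by
    have h := le_mul_of_one_le_left (mul_nonneg hM0 hC0.le) hn1
    have h' : (n:ℝ) * (M * C) = (n:ℝ) * M * C := by ring
    linarith [h, h1]
  set B := c * (M + Real.sqrt ((d:ℝ) * L)) with hBdef
  set s := Real.sqrt ((d:ℝ) * L) with hsdef
  have hs0 : 0 ≤ s := Real.sqrt_nonneg _
  have hssq : s ^ 2 = (d:ℝ) * L := Real.sq_sqrt (by positivity)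
  have hB0 : 0 ≤ B := by positivity
  -- key bound : n B ≤ d/(2c)
  have hnM0 : (0:ℝ) ≤ (n:ℝ) * M := by positivity
  have hns0 : (0:ℝ) ≤ (n:ℝ) * s := by positivity
  have e1 : 4 * c ^ 2 * ((n:ℝ) * M) ≤ d := by
    have h := mul_le_mul_of_nonneg_right hC4 hnM0
    have h' : C * ((n:ℝ) * M) = (n:ℝ) * M * C := by ring
    linarith [h, h1]
  have hns : (n:ℝ) * s ≤ d / C := by
    refine le_of_sq_le_sq_aux (div_pos hd0 hC0) ?_
    have heq : ((n:ℝ) * s) ^ 2 = (n:ℝ)^2 * ((d:ℝ) * L) := by rw [mul_pow, hssq]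
    rw [heq]
    have hn2L : (n:ℝ)^2 * L ≤ M / C := by rw [le_div_iff₀ hC0]; linarith
    have hstep : (n:ℝ)^2 * ((d:ℝ)*L) ≤ (d:ℝ) * (M / C) := by
      have h := mul_le_mul_of_nonneg_left hn2L hd0.le
      have h' : (d:ℝ) * ((n:ℝ)^2 * L) = (n:ℝ)^2 * ((d:ℝ) * L) := by ring
      linarith [h]
    have hM' : M / C ≤ d / C ^ 2 := by
      rw [div_le_div_iff₀ hC0 (by positivity)]
      have h := mul_le_mul_of_nonneg_right hMd hC0.le
      have h' : M * C * C = M * C ^ 2 := by ring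
      linarith [h]
    calc (n:ℝ)^2 * ((d:ℝ)*L) ≤ (d:ℝ) * (M / C) := hstep
      _ ≤ (d:ℝ) * ((d:ℝ) / C ^ 2) := mul_le_mul_of_nonneg_left hM' hd0.le
      _ = ((d:ℝ)/C)^2 := by rw [div_pow]; ring
  have e2 : 4 * c ^ 2 * ((n:ℝ) * s) ≤ d := by
    have hCs : C * ((n:ℝ) * s) ≤ d := by
      have h := mul_le_mul_of_nonneg_left hns hC0.le
      have h' : C * ((d:ℝ) / C) = d := by field_simp
      linarith [h]
    have h := mul_le_mul_of_nonneg_right hC4 hns0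
    linarith [h, hCs]
  have hkey : (n:ℝ) * B ≤ d / (2 * c) := by
    rw [le_div_iff₀ (by positivity)]
    have hexp : (n:ℝ) * B * (2*c) = (2 * c ^ 2 * ((n:ℝ)*M)) + (2 * c ^ 2 * ((n:ℝ)*s)) := by
      rw [hBdef]; ring
    rw [hexp]
    linarith [e1, e2]
  -- margin of the sum
  have hmargin : ∀ k, (inner ℝ (∑ i, z i) (z k) : ℝ) ≥ (d:ℝ) / (2 * c) := by
    intro k
    have hsum : (inner ℝ (∑ i, z i) (z k) : ℝ) = ∑ i, (inner ℝ (z i) (z k) : ℝ) :=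
      sum_inner _ _ _
    rw [hsum, ← Finset.add_sum_erase _ _ (Finset.mem_univ k)]
    have hself : (d:ℝ) / c ≤ (inner ℝ (z k) (z k) : ℝ) := by
      rw [real_inner_self_eq_norm_sq]; exact (hnorm k).1
    have herase : ∑ i ∈ Finset.univ.erase k, (inner ℝ (z i) (z k) : ℝ) ≥ -((n:ℝ) * B) := by
      have hle : ∀ i ∈ Finset.univ.erase k, -B ≤ (inner ℝ (z i) (z k) : ℝ) := by
        intro i hi
        exact neg_le_of_abs_le (hcross i k (Finset.ne_of_mem_erase hi))
      have hsl := Finset.sum_le_sum hle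
      rw [Finset.sum_const, nsmul_eq_mul] at hsl
      have hcard : ((Finset.univ.erase k).card : ℝ) ≤ (n:ℝ) := by
        have := (Finset.card_le_card (Finset.erase_subset k Finset.univ)).trans
          (le_of_eq (by simp : (Finset.univ : Finset (Fin n)).card = n))
        exact_mod_cast this
      have h := mul_le_mul_of_nonneg_right hcard hB0
      have h' : ((Finset.univ.erase k).card : ℝ) * (-B) =
          -(((Finset.univ.erase k).card : ℝ) * B) := by ring
      linarith [hsl, h]
    have hdc : (d:ℝ) / (2*c) ≤ (d:ℝ)/c - (n:ℝ)*B := by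
      have hhalf : (d:ℝ)/c - (d:ℝ)/(2*c) = (d:ℝ)/(2*c) := by field_simp; ring
      linarith [hkey]
    linarith
  -- norm of the sum
  have hnv : ‖∑ i, z i‖ ^ 2 ≤ 2 * c * n * d := by
    have hexp : (‖∑ i, z i‖:ℝ) ^ 2 = ∑ i, ∑ j, (inner ℝ (z i) (z j) : ℝ) := by
      rw [← real_inner_self_eq_norm_sq]
      rw [sum_inner]
      exact Finset.sum_congr rfl fun i _ => inner_sum _ _ _
    rw [hexp]
    have hrow : ∀ i, ∑ j, (inner ℝ (z i) (z j) : ℝ) ≤ c * d + (n:ℝ) * B := by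
      intro i
      rw [← Finset.add_sum_erase _ _ (Finset.mem_univ i)]
      have hself : (inner ℝ (z i) (z i) : ℝ) ≤ c * d := by
        rw [real_inner_self_eq_norm_sq]; exact (hnorm i).2
      have herase : ∑ j ∈ Finset.univ.erase i, (inner ℝ (z i) (z j) : ℝ) ≤ (n:ℝ) * B := by
        have hle : ∀ j ∈ Finset.univ.erase i, (inner ℝ (z i) (z j) : ℝ) ≤ B := by
          intro j hj
          exact le_of_abs_le (hcross i j (Ne.symm (Finset.ne_of_mem_erase hj)))
        have hsl := Finset.sum_le_sum hle
        rw [Finset.sum_const, nsmul_eq_mul] at hsl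
        have hcard : ((Finset.univ.erase i).card : ℝ) ≤ (n:ℝ) := by
          have := (Finset.card_le_card (Finset.erase_subset i Finset.univ)).trans
            (le_of_eq (by simp : (Finset.univ : Finset (Fin n)).card = n))
          exact_mod_cast this
        have h := mul_le_mul_of_nonneg_right hcard hB0
        linarith [hsl, h]
      linarith
    calc ∑ i, ∑ j, (inner ℝ (z i) (z j) : ℝ) ≤ ∑ _i : Fin n, (c * d + (n:ℝ) * B) :=
          Finset.sum_le_sum fun i _ => hrow i
      _ = (n:ℝ) * (c * d + (n:ℝ) * B) := by
          rw [Finset.sum_const, nsmul_eq_mul]; simp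
      _ ≤ 2 * c * n * d := by
          have h1 : (n:ℝ) * B ≤ d := by
            have hdd : (d:ℝ) / (2*c) ≤ d := by
              rw [div_le_iff₀ (by positivity)]
              have := mul_nonneg hd0.le (by linarith : (0:ℝ) ≤ 2*c - 1)
              linarith [this]
            linarith
          have t1 : (n:ℝ) * ((n:ℝ) * B) ≤ (n:ℝ) * d :=
            mul_le_mul_of_nonneg_left h1 (by positivity)
          have t2 : (n:ℝ) * (d:ℝ) ≤ c * ((n:ℝ) * d) :=
            le_mul_of_one_le_left (by positivity) hc
          have hexp2 : (n:ℝ) * (c * d + (n:ℝ) * B) =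
              c * ((n:ℝ) * d) + (n:ℝ) * ((n:ℝ) * B) := by ring
          have hexp3 : 2 * c * (n:ℝ) * d = c * ((n:ℝ) * d) + c * ((n:ℝ) * d) := by ring
          linarith [t1, t2]
  refine ⟨hmargin, hnv, ?_, ⟨∑ i, z i, fun k => lt_of_lt_of_le (by positivity) (hmargin k)⟩⟩
  -- unit-vector margin
  intro k
  have hvpos : 0 < ‖∑ i, z i‖ := by
    have hne : (∑ i, z i) ≠ 0 := by
      intro h
      have hm := hmargin ⟨0, hn⟩
      rw [h] at hm
      simp only [inner_zero_left] at hm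
      have : (0:ℝ) < (d:ℝ)/(2*c) := by positivity
      linarith
    exact norm_pos_iff.mpr hne
  set v := ∑ i, z i with hv
  have hsm : (inner ℝ ((‖v‖)⁻¹ • v) (z k) : ℝ) = (‖v‖)⁻¹ * (inner ℝ v (z k) : ℝ) :=
    real_inner_smul_left _ _ _
  rw [hsm]
  set s2 := Real.sqrt (2 * c * n * d) with hs2def
  have hs2pos : 0 < s2 := Real.sqrt_pos.mpr (by positivity)
  have hvle : ‖v‖ ≤ s2 := by
    have := Real.sqrt_le_sqrt hnv
    rwa [Real.sqrt_sq (norm_nonneg _)] at this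
  set s1 := Real.sqrt ((d:ℝ) / n) with hs1def
  have hs10 : 0 ≤ s1 := Real.sqrt_nonneg _
  set s3 := Real.sqrt (2 * c) with hs3def
  have hs3pos : 0 < s3 := Real.sqrt_pos.mpr (by positivity)
  have hs1sq : s1 ^ 2 = (d:ℝ) / n := Real.sq_sqrt (by positivity)
  have hs2sq : s2 ^ 2 = 2 * c * n * d := Real.sq_sqrt (by positivity)
  have hs3sq : s3 ^ 2 = 2 * c := Real.sq_sqrt (by positivity)
  -- s1 * s2 ≤ d * s3 (squares agree, both nonneg)
  have hprod : s1 * s2 ≤ (d:ℝ) * s3 := by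
    refine le_of_sq_le_sq_aux (by positivity) (le_of_eq ?_)
    have hn0 : ((n:ℝ)) ≠ 0 := by positivity
    rw [mul_pow, mul_pow, hs1sq, hs2sq, hs3sq]
    field_simp
  -- target value times s2 is at most d/(2c)
  have htarget : (1 / (2 * c * s3)) * s1 * s2 ≤ (d:ℝ) / (2 * c) := by
    have h : (1 / (2 * c * s3)) * s1 * s2 = (s1 * s2) / (2 * c * s3) := by ring
    rw [h, div_le_div_iff₀ (by positivity) (by positivity)]
    have hmul := mul_le_mul_of_nonneg_right hprod (by positivity : (0:ℝ) ≤ 2 * c)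
    have h' : (d:ℝ) * s3 * (2 * c) = (d:ℝ) * (2 * c * s3) := by ring
    linarith [hmul]
  -- conclude
  have step1 : (‖v‖)⁻¹ * (inner ℝ v (z k) : ℝ) ≥ (‖v‖)⁻¹ * ((d:ℝ) / (2*c)) :=
    mul_le_mul_of_nonneg_left (hmargin k) (by positivity)
  have step2 : (‖v‖)⁻¹ * ((d:ℝ) / (2*c)) ≥ s2⁻¹ * ((d:ℝ) / (2*c)) := by
    apply mul_le_mul_of_nonneg_right _ (by positivity)
    exact inv_anti₀ hvpos hvle
  have step3 : (1 / (2 * c * s3)) * s1 ≤ s2⁻¹ * ((d:ℝ) / (2*c)) := by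
    rw [inv_mul_eq_div, le_div_iff₀ hs2pos]
    exact htarget
  linarith
end

section
/- Suppose gradient descent on the exponential loss L(θ) = ∑_{i∈[n]} exp(-z_i·θ) with step size η and θ^{(0)} = 0 produces a non-increasing loss sequence. If d/c ≤ ‖z_i‖² ≤ cd for all i, |z_i·z_j| ≤ c(‖μ‖² + √(d log(n/δ))) for i ≠ j, d ≥ C n‖μ‖² ≥ C² n³ log(n/δ) for a sufficiently large C, and η is sufficiently small (η ≤ (log 2)/(2c n d) suffices), then for all t ≥ 0 and all i, j: exp(-z_i·θ^{(t)}) / exp(-z_j·θ^{(t)}) ≤ 4c². -/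
open scoped BigOperators

set_option maxHeartbeats 1000000 in
/-- Loss-ratio boundedness for gradient descent on the exponential loss: under the stated
norm/inner-product bounds and overparameterization, the per-sample losses stay within a
factor `4c²` of each other at every iteration. -/
theorem exp_loss_ratio_bounded (c : ℝ) (hc : 1 ≤ c) :
    ∃ C₀ : ℝ, ∀ C : ℝ, C ≥ C₀ →
      ∀ (d n : ℕ), 0 < d → 0 < n →
      ∀ (δ M η : ℝ), 0 < δ → δ < 1 → 0 ≤ M →
        0 < η → η ≤ Real.log 2 / (2 * c * n * d) →
      ∀ (z : Fin n → EuclideanSpace ℝ (Fin d)) (θ : ℕ → EuclideanSpace ℝ (Fin d)),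
        θ 0 = 0 →
        (∀ t, θ (t + 1) = θ t + η • ∑ i, Real.exp (-(inner ℝ (z i) (θ t) : ℝ)) • z i) →
        (∀ t, ∑ i, Real.exp (-(inner ℝ (z i) (θ (t + 1)) : ℝ)) ≤
          ∑ i, Real.exp (-(inner ℝ (z i) (θ t) : ℝ))) →
        (∀ i, (d : ℝ) / c ≤ ‖z i‖ ^ 2 ∧ ‖z i‖ ^ 2 ≤ c * d) →
        (∀ i j, i ≠ j →
          |(inner ℝ (z i) (z j) : ℝ)| ≤ c * (M + Real.sqrt (d * Real.log (n / δ)))) →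
        (d : ℝ) ≥ C * n * M → C * n * M ≥ C ^ 2 * n ^ 3 * Real.log (n / δ) →
        ∀ (t : ℕ) (i j : Fin n),
          Real.exp (-(inner ℝ (z i) (θ t) : ℝ)) / Real.exp (-(inner ℝ (z j) (θ t) : ℝ)) ≤
            4 * c ^ 2 := by
  refine ⟨32 * c ^ 4, ?_⟩
  intro C hC d n hd hn δ M η hδ0 hδ1 hM hη0 hη z θ hθ0 hupd hmono hnorm hcross hdM hMC
  have hc0 : (0:ℝ) < c := lt_of_lt_of_le one_pos hc
  have hC0 : (0:ℝ) < C := lt_of_lt_of_le (by positivity) hC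
  have hn0 : (0:ℝ) < n := by exact_mod_cast hn
  have hd0 : (0:ℝ) < d := by exact_mod_cast hd
  set ℓ : ℕ → Fin n → ℝ := fun t k => Real.exp (-(inner ℝ (z k) (θ t) : ℝ)) with hℓ
  have hℓpos : ∀ t k, 0 < ℓ t k := fun t k => Real.exp_pos _
  have hsum : ∀ t, ∑ k, ℓ t k ≤ n := by
    intro t
    induction t with
    | zero => simp [hℓ, hθ0]
    | succ t ih => exact le_trans (hmono t) ih
  -- cross-term bound
  have hB : ∀ k m : Fin n, k ≠ m → |(inner ℝ (z k) (z m) : ℝ)| ≤ 2 * c * d / (C * n) := by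
    intro k m hkm
    refine le_trans (hcross k m hkm) ?_
    have hM1 : M ≤ (d : ℝ) / (C * n) := by
      rw [le_div_iff₀ (by positivity)]
      nlinarith [hdM]
    have hlog : Real.log (n / δ) ≤ M / (C * n ^ 2) := by
      rw [le_div_iff₀ (by positivity)]
      have h1 : (C * (n:ℝ)) * (Real.log ((n:ℝ) / δ) * (C * (n:ℝ) ^ 2)) ≤ (C * (n:ℝ)) * M := by
        nlinarith [hMC]
      exact le_of_mul_le_mul_left h1 (by positivity)
    have hsqrt : Real.sqrt ((d : ℝ) * Real.log (n / δ)) ≤ (d : ℝ) / (C * n) := by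
      have h1 : (d : ℝ) * Real.log (n / δ) ≤ ((d : ℝ) / (C * n)) ^ 2 := by
        have h2 : (d : ℝ) * Real.log (n / δ) ≤ (d : ℝ) * (M / (C * n ^ 2)) :=
          mul_le_mul_of_nonneg_left hlog hd0.le
        have h3 : (d : ℝ) * (M / (C * n ^ 2)) ≤ ((d : ℝ) / (C * n)) ^ 2 := by
          rw [← mul_div_assoc, div_pow, div_le_div_iff₀ (by positivity) (by positivity)]
          have hM2 : M * (C * (n:ℝ)) ≤ d := by nlinarith [hdM]
          have hn1 : (1:ℝ) ≤ n := by exact_mod_cast hn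
          nlinarith [mul_le_mul_of_nonneg_left hM2 (by positivity : (0:ℝ) ≤ (d:ℝ) * C * n),
            mul_le_mul_of_nonneg_left hn1 (by positivity : (0:ℝ) ≤ (d:ℝ) ^ 2 * C * n)]
        linarith
      calc Real.sqrt ((d : ℝ) * Real.log (n / δ)) ≤ Real.sqrt (((d : ℝ) / (C * n)) ^ 2) :=
            Real.sqrt_le_sqrt h1
        _ = (d : ℝ) / (C * n) := by rw [Real.sqrt_sq (by positivity)]
    calc c * (M + Real.sqrt ((d : ℝ) * Real.log (n / δ)))
        ≤ c * ((d : ℝ) / (C * n) + (d : ℝ) / (C * n)) := by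
          apply mul_le_mul_of_nonneg_left _ hc0.le
          linarith
      _ = 2 * c * d / (C * n) := by ring
  -- Cauchy-Schwarz style bound
  have hCS : ∀ k m : Fin n, |(inner ℝ (z k) (z m) : ℝ)| ≤ c * d := by
    intro k m
    refine le_trans (abs_real_inner_le_norm _ _) ?_
    nlinarith [(hnorm k).2, (hnorm m).2, norm_nonneg (z k), norm_nonneg (z m),
      sq_nonneg (‖z k‖ - ‖z m‖)]
  -- one-step recursion
  have hrec : ∀ t k, ℓ (t+1) k =
      ℓ t k * Real.exp (-(η * ∑ m, ℓ t m * (inner ℝ (z m) (z k) : ℝ))) := by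
    intro t k
    have h1 : (inner ℝ (z k) (θ (t+1)) : ℝ) =
        (inner ℝ (z k) (θ t) : ℝ) + η * ∑ m, ℓ t m * (inner ℝ (z m) (z k) : ℝ) := by
      rw [hupd t, inner_add_right, inner_smul_right, inner_sum]
      congr 2
      refine Finset.sum_congr rfl fun m _ => ?_
      rw [inner_smul_right, real_inner_comm (z k) (z m)]
    show Real.exp _ = _
    rw [h1, neg_add, Real.exp_add]
  -- bound on |S_k|
  have habs : ∀ t k, |∑ m, ℓ t m * (inner ℝ (z m) (z k) : ℝ)| ≤ c * d * n := by
    intro t k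
    calc |∑ m, ℓ t m * (inner ℝ (z m) (z k) : ℝ)|
        ≤ ∑ m, |ℓ t m * (inner ℝ (z m) (z k) : ℝ)| := Finset.abs_sum_le_sum_abs _ _
      _ ≤ ∑ m, ℓ t m * (c * d) := by
          refine Finset.sum_le_sum fun m _ => ?_
          rw [abs_mul, abs_of_pos (hℓpos t m)]
          exact mul_le_mul_of_nonneg_left (hCS m k) (hℓpos t m).le
      _ = (∑ m, ℓ t m) * (c * d) := by rw [← Finset.sum_mul]
      _ ≤ n * (c * d) := mul_le_mul_of_nonneg_right (hsum t) (by positivity)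
      _ = c * d * n := by ring
  -- main induction
  have main : ∀ t, ∀ i j : Fin n, ℓ t i ≤ 4 * c ^ 2 * ℓ t j := by
    intro t
    induction t with
    | zero =>
      intro i j
      have h0 : ∀ k : Fin n, ℓ 0 k = 1 := by intro k; simp [hℓ, hθ0]
      rw [h0 i, h0 j]
      nlinarith
    | succ t ih =>
      intro i j
      rw [hrec t i, hrec t j]
      set Si := ∑ m, ℓ t m * (inner ℝ (z m) (z i) : ℝ) with hSi
      set Sj := ∑ m, ℓ t m * (inner ℝ (z m) (z j) : ℝ) with hSj
      by_cases hcase : ℓ t i ≤ 2 * c ^ 2 * ℓ t j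
      · -- ratio small: can at most double
        have h2 : Real.exp (-(η * Si)) ≤ 2 * Real.exp (-(η * Sj)) := by
          rw [show (2:ℝ) = Real.exp (Real.log 2) from (Real.exp_log two_pos).symm,
            ← Real.exp_add]
          apply Real.exp_le_exp.mpr
          have hd1 : Sj - Si ≤ 2 * (c * d * n) := by
            have h3 := abs_le.mp (habs t i)
            have h4 := abs_le.mp (habs t j)
            linarith [h3.1, h4.2]
          have h5 : η * (Sj - Si) ≤ η * (2 * (c * d * n)) :=
            mul_le_mul_of_nonneg_left hd1 hη0.le
          have h6 : η * (2 * (c * d * n)) ≤ Real.log 2 := by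
            have := (le_div_iff₀ (show (0:ℝ) < 2 * c * n * d by positivity)).mp hη
            nlinarith
          linarith
        have hep := Real.exp_pos (-(η * Si))
        have heq := Real.exp_pos (-(η * Sj))
        calc ℓ t i * Real.exp (-(η * Si))
            ≤ (2 * c ^ 2 * ℓ t j) * (2 * Real.exp (-(η * Sj))) := by
              apply mul_le_mul hcase h2 hep.le
              positivity
          _ = 4 * c ^ 2 * (ℓ t j * Real.exp (-(η * Sj))) := by ring
      · -- ratio large: it does not increase
        push_neg at hcase
        have hji : 2 * c ^ 2 * ℓ t j ≤ ℓ t i := hcase.le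
        -- cross sums bound
        have hbig : ∀ m : Fin n, ℓ t m ≤ 4 * c ^ 2 * ℓ t i := fun m => ih m i
        set B := 2 * c * d / (C * n) with hBdef
        have hBpos : 0 ≤ B := by positivity
        have hcrossSum : ∀ k : Fin n, ∀ m ∈ Finset.univ.erase k,
            |ℓ t m * (inner ℝ (z m) (z k) : ℝ)| ≤ 4 * c ^ 2 * ℓ t i * B := by
          intro k m hm
          rw [abs_mul, abs_of_pos (hℓpos t m)]
          have hmk : m ≠ k := Finset.ne_of_mem_erase hm
          calc ℓ t m * |(inner ℝ (z m) (z k) : ℝ)| ≤ (4 * c ^ 2 * ℓ t i) * B := by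
                apply mul_le_mul (hbig m) (hB m k hmk) (abs_nonneg _) (by positivity)
            _ = 4 * c ^ 2 * ℓ t i * B := rfl
        have hsplit : ∀ k : Fin n, ∑ m, ℓ t m * (inner ℝ (z m) (z k) : ℝ) =
            ℓ t k * ‖z k‖ ^ 2 + ∑ m ∈ Finset.univ.erase k, ℓ t m * (inner ℝ (z m) (z k) : ℝ) := by
          intro k
          rw [← Finset.add_sum_erase _ _ (Finset.mem_univ k), real_inner_self_eq_norm_sq]
        have herasebound : ∀ k : Fin n,
            |∑ m ∈ Finset.univ.erase k, ℓ t m * (inner ℝ (z m) (z k) : ℝ)|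
              ≤ n * (4 * c ^ 2 * ℓ t i * B) := by
          intro k
          calc |∑ m ∈ Finset.univ.erase k, ℓ t m * (inner ℝ (z m) (z k) : ℝ)|
              ≤ ∑ m ∈ Finset.univ.erase k, |ℓ t m * (inner ℝ (z m) (z k) : ℝ)| :=
                Finset.abs_sum_le_sum_abs _ _
            _ ≤ ∑ _m ∈ Finset.univ.erase k, (4 * c ^ 2 * ℓ t i * B) :=
                Finset.sum_le_sum (hcrossSum k)
            _ = (Finset.univ.erase k).card * (4 * c ^ 2 * ℓ t i * B) := by
                rw [Finset.sum_const, nsmul_eq_mul]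
            _ ≤ n * (4 * c ^ 2 * ℓ t i * B) := by
                apply mul_le_mul_of_nonneg_right _ (by positivity)
                have : (Finset.univ.erase k).card ≤ n := by
                  calc (Finset.univ.erase k).card ≤ (Finset.univ : Finset (Fin n)).card :=
                        Finset.card_le_card (Finset.erase_subset _ _)
                    _ = n := by simp
                exact_mod_cast this
        have hnB : (n : ℝ) * B = 2 * c * d / C := by
          rw [hBdef]; field_simp
        -- key inequality: Sj ≤ Si
        have hkey : Sj ≤ Si := by
          have hSi_lb : ℓ t i * ((d:ℝ) / c) - n * (4 * c ^ 2 * ℓ t i * B) ≤ Si := by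
            rw [hSi, hsplit i]
            have h1 : ℓ t i * ((d:ℝ) / c) ≤ ℓ t i * ‖z i‖ ^ 2 :=
              mul_le_mul_of_nonneg_left (hnorm i).1 (hℓpos t i).le
            have h2 := (abs_le.mp (herasebound i)).1
            linarith
          have hSj_ub : Sj ≤ ℓ t j * (c * d) + n * (4 * c ^ 2 * ℓ t i * B) := by
            rw [hSj, hsplit j]
            have h1 : ℓ t j * ‖z j‖ ^ 2 ≤ ℓ t j * (c * d) :=
              mul_le_mul_of_nonneg_left (hnorm j).2 (hℓpos t j).le
            have h2 := (abs_le.mp (herasebound j)).2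
            linarith
          have hfinal : ℓ t j * (c * d) + 2 * ((n:ℝ) * (4 * c ^ 2 * ℓ t i * B))
              ≤ ℓ t i * ((d:ℝ) / c) := by
            have hnB2 : (n:ℝ) * (4 * c ^ 2 * ℓ t i * B) = 4 * c ^ 2 * ℓ t i * (2 * c * d / C) := by
              rw [show (n:ℝ) * (4 * c ^ 2 * ℓ t i * B) = 4 * c ^ 2 * ℓ t i * ((n:ℝ) * B) by ring,
                hnB]
            rw [hnB2]
            have hC' : 32 * c ^ 4 ≤ C := hC
            have e0 : 4 * c ^ 2 * ℓ t i * (2 * c * (d:ℝ) / C) = 8 * c ^ 3 * d * ℓ t i / C := by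
              field_simp; ring
            have e1 : 8 * c ^ 3 * (d:ℝ) * ℓ t i / C ≤ (d:ℝ) * ℓ t i / (4 * c) := by
              rw [div_le_div_iff₀ hC0 (by positivity)]
              nlinarith [mul_le_mul_of_nonneg_right hC'
                (by positivity : (0:ℝ) ≤ (d:ℝ) * ℓ t i)]
            have e3 : ℓ t j * (c * (d:ℝ)) ≤ ℓ t i * d / (2 * c) := by
              rw [le_div_iff₀ (by positivity)]
              nlinarith [mul_le_mul_of_nonneg_right hji hd0.le]
            have e5 : 2 * ((d:ℝ) * ℓ t i / (4 * c)) = ℓ t i * d / (2 * c) := by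
              field_simp; ring
            have e6 : ℓ t i * (d:ℝ) / (2 * c) + ℓ t i * d / (2 * c) = ℓ t i * ((d:ℝ) / c) := by
              field_simp; ring
            rw [e0]
            linarith [e1, e3, e5, e6]
          linarith
        have hmono2 : Real.exp (-(η * Si)) ≤ Real.exp (-(η * Sj)) := by
          apply Real.exp_le_exp.mpr
          have := mul_le_mul_of_nonneg_left hkey hη0.le
          linarith
        calc ℓ t i * Real.exp (-(η * Si))
            ≤ (4 * c ^ 2 * ℓ t j) * Real.exp (-(η * Sj)) := by
              apply mul_le_mul (ih i j) hmono2 (Real.exp_pos _).le (by positivity)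
          _ = 4 * c ^ 2 * (ℓ t j * Real.exp (-(η * Sj))) := by ring
  -- conclude
  intro t i j
  rw [div_le_iff₀ (Real.exp_pos _)]
  have := main t i j
  have h := (hℓpos t j)
  calc Real.exp (-(inner ℝ (z i) (θ t) : ℝ)) = ℓ t i := rfl
    _ ≤ 4 * c ^ 2 * ℓ t j := main t i j
    _ = 4 * c ^ 2 * Real.exp (-(inner ℝ (z j) (θ t) : ℝ)) := rfl
end
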